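/- Fix a field k and n ∈ ℕ. Every short exact sequence 0 → B^n → E → B^n → 0 of k[I]-modules in which E is smooth splits; that is, if a smooth k[I]-module E has a submodule N isomorphic to B^n with E/N isomorphic to B^n, then N is a direct summand of E as a k[I]-module. -/

import Mathlib

open scoped Classical

noncomputable section

/-- The increasing monoid `I`: the submonoid of `Function.End ℕ+` (functions under
composition) consisting of strictly increasing functions `σ : ℕ+ → ℕ+` such that
`σ n = n + ℓ` for some `ℓ` and all sufficiently large `n`. -/
def IncMonoid : Submonoid (Function.End ℕ+) where
  carrier := {f | StrictMono f ∧ ∃ (l : ℕ) (N : ℕ+), ∀ n : ℕ+, N ≤ n → ((f n : ℕ) = (n : ℕ) + l)}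
  one_mem' := ⟨fun _ _ h => h, 0, 1, fun n _ => by show ((n : ℕ+) : ℕ) = (n : ℕ) + 0; omega⟩
  mul_mem' := by
    rintro f g ⟨hf1, lf, Nf, hf2⟩ ⟨hg1, lg, Ng, hg2⟩
    refine ⟨hf1.comp hg1, lg + lf, max Nf Ng, fun n hn => ?_⟩
    have h1 : (g n : ℕ) = (n : ℕ) + lg := hg2 n (le_trans (le_max_right _ _) hn)
    have h2 : Nf ≤ g n := by
      rw [← PNat.coe_le_coe, h1]
      have : (Nf : ℕ) ≤ (n : ℕ) := (PNat.coe_le_coe _ _).2 (le_trans (le_max_left _ _) hn)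
      omega
    have h3 := hf2 (g n) h2
    show ((f (g n) : ℕ)) = (n : ℕ) + (lg + lf)
    omega

/-- The increasing monoid, as a type. -/
abbrev IncM : Type := IncMonoid

theorem IncM.strictMono (σ : IncM) : StrictMono σ.1 := σ.2.1

theorem IncM.le_apply (σ : IncM) (n : ℕ+) : n ≤ σ.1 n := by
  induction n using PNat.recOn with
  | one => exact (σ.1 1).one_le
  | succ n ih =>
      have h2 : σ.1 n < σ.1 (n + 1) := σ.strictMono (by rw [← PNat.coe_lt_coe]; push_cast; omega)
      rw [← PNat.coe_le_coe] at *
      rw [← PNat.coe_lt_coe] at h2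
      push_cast at *
      omega

/-- The underlying function of the generator `α_k`. -/
def alphaFun (k : ℕ+) : Function.End ℕ+ := fun n => if n < k then n else n + 1

theorem alphaFun_strictMono (k : ℕ+) : StrictMono (alphaFun k) := by
  intro a b hab
  unfold alphaFun
  split_ifs with h1 h2 <;>
    rw [← PNat.coe_lt_coe] at * <;> push_cast at * <;> omega

theorem alphaFun_mem (k : ℕ+) : alphaFun k ∈ IncMonoid := by
  refine ⟨alphaFun_strictMono k, 1, k, fun n hn => ?_⟩
  unfold alphaFun
  rw [if_neg (not_lt.2 hn)]
  push_cast
  ring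

/-- The generator `α_k` of the increasing monoid (`k ≥ 1`). -/
def alpha (k : ℕ+) : IncM := ⟨alphaFun k, alphaFun_mem k⟩

/-- The submonoid `I_{≥ n}` of `I` generated by the `α_i` with `i ≥ n`. -/
def Iges (n : ℕ+) : Submonoid IncM := Submonoid.closure (alpha '' Set.Ici n)

/-- The submonoid `I_{> n}` of `I` generated by the `α_i` with `i > n`. -/
def Igt (n : ℕ) : Submonoid IncM := Submonoid.closure {s | ∃ i : ℕ+, n < (i : ℕ) ∧ s = alpha i}

/-- The monoid algebra `k[I]` of the increasing monoid. -/
abbrev IncAlg (k : Type*) [Field k] : Type _ := MonoidAlgebra k IncM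

/-- The image of `σ ∈ I` in the monoid algebra `k[I]`. -/
abbrev ofInc (k : Type*) [Field k] (σ : IncM) : IncAlg k := MonoidAlgebra.of k IncM σ

/-- A `k[I]`-module is smooth if every vector is fixed by some `I_{>n}`. -/
def IsSmoothMod (k : Type*) [Field k] (M : Type*) [AddCommMonoid M]
    [Module (IncAlg k) M] : Prop :=
  ∀ x : M, ∃ n : ℕ, ∀ σ ∈ Igt n, ofInc k σ • x = x

/-! ### The principal modules `A^r` -/

/-- Index set for the basis of the principal module `A^r`:
strictly increasing `r`-tuples of positive integers. -/
def Idx (r : ℕ) : Type := {v : Fin r → ℕ+ // StrictMono v}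

/-- The action of `σ ∈ I` on the index set of `A^r`. -/
def idxAct {r : ℕ} (σ : IncM) (t : Idx r) : Idx r :=
  ⟨σ.1 ∘ t.1, (IncM.strictMono σ).comp t.2⟩

/-- The representation of the increasing monoid on the principal module `A^r`. -/
def prinRep (k : Type*) [Field k] (r : ℕ) : Representation k IncM (Idx r →₀ k) where
  toFun σ := Finsupp.lmapDomain k k (idxAct σ)
  map_one' := LinearMap.ext fun v => by
    have h : (idxAct (1 : IncM) : Idx r → Idx r) = id := funext fun t => rfl
    simp [Finsupp.lmapDomain_apply, h, Finsupp.mapDomain_id]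
  map_mul' := fun σ τ => LinearMap.ext fun v => by
    have h : (idxAct (σ * τ) : Idx r → Idx r) = (idxAct σ) ∘ (idxAct τ) :=
      funext fun t => rfl
    show Finsupp.lmapDomain k k (idxAct (σ * τ)) v =
      Finsupp.lmapDomain k k (idxAct σ) (Finsupp.lmapDomain k k (idxAct τ) v)
    simp [Finsupp.lmapDomain_apply, h, Finsupp.mapDomain_comp]

/-- The principal module `A^r`, as a module over the monoid algebra `k[I]`. -/
abbrev PrinMod (k : Type*) [Field k] (r : ℕ) : Type _ := (prinRep k r).asModule

/-- The basis vector `e_t` of the principal module `A^r`. -/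
def ePrin (k : Type*) [Field k] {r : ℕ} (t : Idx r) : PrinMod k r :=
  (prinRep k r).asModuleEquiv.symm (Finsupp.single t 1)

/-- The tuple `(1, 2, …, r)` indexing the canonical generator `e_{1,…,r}` of `A^r`. -/
def iotaIdx (r : ℕ) : Idx r :=
  ⟨fun i => ⟨(i : ℕ) + 1, Nat.succ_pos _⟩, fun a b h => by
    exact (PNat.coe_lt_coe _ _).1 (Nat.succ_lt_succ h)⟩

/-! ### The simple modules `B^n` -/

/-- `σ ∈ I` fixes the natural number `n`, with the convention `σ 0 = 0`. -/
def fixesNat (σ : IncM) (n : ℕ) : Prop := ∀ h : 0 < n, σ.1 ⟨n, h⟩ = ⟨n, h⟩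

theorem fixesNat_mul (σ τ : IncM) (n : ℕ) :
    fixesNat (σ * τ) n ↔ fixesNat σ n ∧ fixesNat τ n := by
  rcases Nat.eq_zero_or_pos n with h0 | h0
  · subst h0
    constructor
    · exact fun _ => ⟨fun h => absurd h (lt_irrefl 0), fun h => absurd h (lt_irrefl 0)⟩
    · exact fun _ h => absurd h (lt_irrefl 0)
  · set p : ℕ+ := ⟨n, h0⟩
    have happ : ∀ h : 0 < n, (σ * τ).1 ⟨n, h⟩ = σ.1 (τ.1 ⟨n, h⟩) := fun _ => rfl
    constructor
    · intro h
      have hfix : σ.1 (τ.1 p) = p := h h0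
      have h1 : p ≤ τ.1 p := τ.le_apply p
      have h2 : τ.1 p ≤ σ.1 (τ.1 p) := σ.le_apply _
      have hτp : τ.1 p = p := le_antisymm (h2.trans_eq hfix) h1
      have hσp : σ.1 p = p := by rw [hτp] at hfix; exact hfix
      exact ⟨fun _ => hσp, fun _ => hτp⟩
    · rintro ⟨hσ, hτ⟩ h
      rw [happ h]
      have := hτ h0
      rw [this, hσ h0]

/-- The representation of the increasing monoid on the simple module `B^n`:
`σ` acts by the identity if `σ(n) = n` (with `σ(0) = 0`) and by `0` otherwise. -/
def bRep (k : Type*) [Field k] (n : ℕ) : Representation k IncM k where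
  toFun σ := if fixesNat σ n then 1 else 0
  map_one' := by
    try dsimp only
    rw [if_pos]
    intro h
    rfl
  map_mul' := fun σ τ => by
    try dsimp only
    by_cases hσ : fixesNat σ n
    · by_cases hτ : fixesNat τ n
      · rw [if_pos ((fixesNat_mul σ τ n).2 ⟨hσ, hτ⟩), if_pos hσ, if_pos hτ, one_mul]
      · rw [if_neg (fun h => hτ ((fixesNat_mul σ τ n).1 h).2), if_pos hσ, if_neg hτ, one_mul]
    · by_cases hτ : fixesNat τ n
      · rw [if_neg (fun h => hσ ((fixesNat_mul σ τ n).1 h).1), if_neg hσ, if_pos hτ, mul_one]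
      · rw [if_neg (fun h => hσ ((fixesNat_mul σ τ n).1 h).1), if_neg hσ, if_neg hτ, mul_zero]

/-- The simple module `B^n`, as a module over the monoid algebra `k[I]`. -/
abbrev BMod (k : Type*) [Field k] (n : ℕ) : Type _ := (bRep k n).asModule

/-! ### Auxiliary lemmas: combinatorics of the increasing monoid -/

theorem pnat_mk_coe (x : ℕ) (h : 0 < x) : ((⟨x, h⟩ : ℕ+) : ℕ) = x := rfl

theorem IncM.coe_add_le (σ : IncM) : ∀ (d : ℕ) (a : ℕ+),
    (σ.1 a : ℕ) + d ≤ (σ.1 ⟨(a : ℕ) + d, by positivity⟩ : ℕ) := by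
  intro d
  induction d with
  | zero =>
      intro a
      have ha : (⟨(a : ℕ) + 0, by positivity⟩ : ℕ+) = a := Subtype.ext (Nat.add_zero _)
      rw [ha]; omega
  | succ d ih =>
      intro a
      have h1 : (⟨(a : ℕ) + d, by positivity⟩ : ℕ+) < ⟨(a : ℕ) + (d+1), by positivity⟩ := by
        exact Subtype.mk_lt_mk.2 (by omega)
      have h2 := σ.strictMono h1
      rw [← PNat.coe_lt_coe] at h2
      have := ih a
      omega

theorem IncM.mono_le (σ : IncM) (a b : ℕ+) (h : a ≤ b) :
    (σ.1 a : ℕ) + ((b : ℕ) - (a : ℕ)) ≤ (σ.1 b : ℕ) := by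
  have h' := σ.coe_add_le ((b : ℕ) - (a : ℕ)) a
  have h2 : (a : ℕ) ≤ (b : ℕ) := (PNat.coe_le_coe _ _).2 h
  have hb : (⟨(a : ℕ) + ((b:ℕ) - (a:ℕ)), by positivity⟩ : ℕ+) = b := Subtype.ext (Nat.add_sub_cancel' h2)
  rwa [hb] at h'

theorem IncM.mul_apply (σ τ : IncM) (m : ℕ+) : (σ * τ).1 m = σ.1 (τ.1 m) := rfl

theorem alpha_coe (i : ℕ+) (m : ℕ+) :
    ((alpha i).1 m : ℕ) = if (m : ℕ) < (i : ℕ) then (m : ℕ) else (m : ℕ) + 1 := by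
  show ((alphaFun i m : ℕ+) : ℕ) = _
  unfold alphaFun
  split_ifs with h1 h2 h3
  · rfl
  · rw [← PNat.coe_lt_coe] at h1; omega
  · rw [← PNat.coe_lt_coe] at h1; omega
  · push_cast; ring

theorem alpha_rel (i j : ℕ+) (hij : i ≤ j) :
    alpha i * alpha j = alpha (j + 1) * alpha i := by
  apply Subtype.ext
  funext m
  have h1 : (alpha i * alpha j).1 m = (alpha i).1 ((alpha j).1 m) := rfl
  have h2 : (alpha (j+1) * alpha i).1 m = (alpha (j+1)).1 ((alpha i).1 m) := rfl
  show (alpha i * alpha j).1 m = (alpha (j+1) * alpha i).1 m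
  rw [h1, h2]
  apply PNat.coe_injective
  rw [← PNat.coe_le_coe] at hij
  have e1 := alpha_coe j m
  have e2 := alpha_coe i ((alpha j).1 m)
  have e3 := alpha_coe i m
  have e4 := alpha_coe (j+1) ((alpha i).1 m)
  have hj1 : ((j + 1 : ℕ+) : ℕ) = (j : ℕ) + 1 := rfl
  rw [hj1] at e4
  rw [e2, e4, e1, e3]
  split_ifs <;> omega
theorem IncM.eq_one_of_shift_zero (σ : IncM) (N : ℕ+)
    (hN : ∀ m : ℕ+, N ≤ m → (σ.1 m : ℕ) = (m : ℕ)) : σ = 1 := by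
  apply Subtype.ext
  funext m
  show σ.1 m = m
  apply PNat.coe_injective
  rcases le_or_gt N m with h | h
  · exact hN m h
  · have h1 : (m : ℕ) ≤ (σ.1 m : ℕ) := by exact_mod_cast σ.le_apply m
    have h2 := σ.mono_le m N h.le
    have h3 := hN N le_rfl
    have hm : (m : ℕ) < (N : ℕ) := by exact_mod_cast h
    omega

theorem gen_aux : ∀ (l : ℕ) (σ : IncM) (N : ℕ+),
    (∀ m : ℕ+, N ≤ m → (σ.1 m : ℕ) = (m : ℕ) + l) →
    σ ∈ Submonoid.closure (Set.range alpha) := by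
  intro l
  induction l with
  | zero =>
      intro σ N hN
      have h : σ = 1 := IncM.eq_one_of_shift_zero σ N (by simpa using hN)
      rw [h]; exact one_mem _
  | succ l ih =>
      intro σ N hN
      have hP : ∃ m : ℕ, 0 < m ∧ ∀ h : 0 < m, σ.1 ⟨m, h⟩ ≠ ⟨m, h⟩ := by
        refine ⟨(N : ℕ), N.2, fun h hEq => ?_⟩
        have hNm : (⟨(N : ℕ), h⟩ : ℕ+) = N := Subtype.ext rfl
        rw [hNm] at hEq
        have h2 := hN N le_rfl
        rw [hEq] at h2
        omega
      set i0 := Nat.find hP with hi0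
      obtain ⟨hi0pos, hi0ne⟩ := Nat.find_spec hP
      set i : ℕ+ := ⟨i0, hi0pos⟩ with hidef
      have hic : (i : ℕ) = i0 := rfl
      have hfix : ∀ m : ℕ+, m < i → σ.1 m = m := by
        intro m hm
        have hmlt : (m : ℕ) < i0 := by
          rw [← hic]; exact_mod_cast hm
        have hnot := Nat.find_min hP hmlt
        by_contra hne
        refine hnot ⟨m.2, fun h => ?_⟩
        have hmm : (⟨(m : ℕ), h⟩ : ℕ+) = m := rfl
        rw [hmm]
        exact hne
      have hgt : i0 < (σ.1 i : ℕ) := by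
        have h1 : (i : ℕ) ≤ (σ.1 i : ℕ) := by exact_mod_cast σ.le_apply i
        have h2 : σ.1 i ≠ i := hi0ne hi0pos
        have h3 : (σ.1 i : ℕ) ≠ (i : ℕ) := fun hc => h2 (PNat.coe_injective hc)
        omega
      have hσgt : ∀ m : ℕ+, i ≤ m → i0 < (σ.1 m : ℕ) := by
        intro m hm
        have h1 : σ.1 i ≤ σ.1 m := σ.strictMono.le_iff_le.2 hm
        have h1' : (σ.1 i : ℕ) ≤ (σ.1 m : ℕ) := by exact_mod_cast h1
        omega
      have hgpos : ∀ m : ℕ+, 0 < (if (σ.1 m : ℕ) ≤ i0 then (σ.1 m : ℕ) else (σ.1 m : ℕ) - 1) := by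
        intro m
        split_ifs with h
        · exact (σ.1 m).2
        · have := (σ.1 m).2; omega
      set tf : ℕ+ → ℕ+ := fun m =>
        ⟨if (σ.1 m : ℕ) ≤ i0 then (σ.1 m : ℕ) else (σ.1 m : ℕ) - 1, hgpos m⟩ with htf
      have htf_coe : ∀ m, (tf m : ℕ) =
          if (σ.1 m : ℕ) ≤ i0 then (σ.1 m : ℕ) else (σ.1 m : ℕ) - 1 := fun m => rfl
      have hlow : ∀ m : ℕ+, m < i → (tf m : ℕ) = (m : ℕ) := by
        intro m hm
        have h1 : (m : ℕ) < i0 := by rw [← hic]; exact_mod_cast hm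
        rw [htf_coe, hfix m hm, if_pos (by omega)]
      have hhigh : ∀ m : ℕ+, i ≤ m → (tf m : ℕ) = (σ.1 m : ℕ) - 1 := by
        intro m hm
        have := hσgt m hm
        rw [htf_coe, if_neg (by omega)]
      have htmono : StrictMono tf := by
        intro a b hab
        have hs : (σ.1 a : ℕ) < (σ.1 b : ℕ) := by exact_mod_cast σ.strictMono hab
        have goal : (tf a : ℕ) < (tf b : ℕ) := by
          rcases lt_or_ge a i with ha | ha
          · rcases lt_or_ge b i with hb | hb
            · rw [hlow a ha, hlow b hb]; exact_mod_cast hab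
            · have h1 := hσgt b hb
              have h2 : (a : ℕ) < i0 := by rw [← hic]; exact_mod_cast ha
              rw [hlow a ha, hhigh b hb]; omega
          · have hb : i ≤ b := ha.trans hab.le
            have h1 := hσgt a ha
            have h2 := hσgt b hb
            rw [hhigh a ha, hhigh b hb]; omega
        exact_mod_cast goal
      have hτshift : ∀ m : ℕ+, max N i ≤ m → (tf m : ℕ) = (m : ℕ) + l := by
        intro m hm
        have h1 : N ≤ m := le_trans (le_max_left _ _) hm
        have h2 : i ≤ m := le_trans (le_max_right _ _) hm
        have h3 := hσgt m h2
        rw [hhigh m h2, hN m h1]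
        omega
      have hτmem : tf ∈ IncMonoid := ⟨htmono, l, max N i, hτshift⟩
      set τ : IncM := ⟨tf, hτmem⟩ with hτ
      have hfact : σ = alpha i * τ := by
        apply Subtype.ext
        funext m
        show σ.1 m = (alpha i).1 (tf m)
        apply PNat.coe_injective
        rw [alpha_coe, hic]
        rcases lt_or_ge m i with hm | hm
        · have h1 : (m : ℕ) < i0 := by rw [← hic]; exact_mod_cast hm
          have h2 : (σ.1 m : ℕ) = (m : ℕ) := by rw [hfix m hm]
          rw [hlow m hm, if_pos h1]; omega
        · have h1 := hσgt m hm
          rw [hhigh m hm, if_neg (by omega)]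
          omega
      rw [hfact]
      exact mul_mem (Submonoid.subset_closure ⟨i, rfl⟩) (ih τ (max N i) hτshift)

theorem IncM.mem_closure_alpha (σ : IncM) : σ ∈ Submonoid.closure (Set.range alpha) := by
  obtain ⟨_, l, N, hN⟩ := σ.2
  exact gen_aux l σ N hN
/-! ### The character χ and computations in `B^n` -/

def chi (k : Type*) [Field k] (n : ℕ) (σ : IncM) : k := if fixesNat σ n then 1 else 0

theorem chi_one (k : Type*) [Field k] (n : ℕ) : chi k n 1 = 1 := by
  unfold chi
  rw [if_pos]
  intro h
  rfl

theorem chi_mul (k : Type*) [Field k] (n : ℕ) (σ τ : IncM) :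
    chi k n (σ * τ) = chi k n σ * chi k n τ := by
  unfold chi
  by_cases hσ : fixesNat σ n
  · by_cases hτ : fixesNat τ n
    · rw [if_pos ((fixesNat_mul σ τ n).2 ⟨hσ, hτ⟩), if_pos hσ, if_pos hτ, one_mul]
    · rw [if_neg (fun h => hτ ((fixesNat_mul σ τ n).1 h).2), if_pos hσ, if_neg hτ, one_mul]
  · by_cases hτ : fixesNat τ n
    · rw [if_neg (fun h => hσ ((fixesNat_mul σ τ n).1 h).1), if_neg hσ, if_pos hτ, mul_one]
    · rw [if_neg (fun h => hσ ((fixesNat_mul σ τ n).1 h).1), if_neg hσ, if_neg hτ, mul_zero]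

theorem chi_alpha (k : Type*) [Field k] (n : ℕ) (i : ℕ+) :
    chi k n (alpha i) = if n < (i : ℕ) then 1 else 0 := by
  unfold chi
  by_cases h : n < (i : ℕ)
  · rw [if_pos h, if_pos]
    intro hn
    apply PNat.coe_injective
    have h3 := alpha_coe i ⟨n, hn⟩
    rw [PNat.mk_coe, if_pos h] at h3
    exact h3
  · rw [if_neg h, if_neg]
    intro hfix
    have hn : 0 < n := by have := i.pos; omega
    have h2 := congrArg (PNat.val) (hfix hn)
    have h3 := alpha_coe i ⟨n, hn⟩
    rw [PNat.mk_coe, if_neg h] at h3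
    have h4 : n + 1 = n := h3.symm.trans h2
    omega

theorem bRep_apply (k : Type*) [Field k] (n : ℕ) (σ : IncM) :
    (bRep k n) σ = if fixesNat σ n then (1 : k →ₗ[k] k) else 0 := rfl

theorem bmod_single_smul (k : Type*) [Field k] (n : ℕ) (σ : IncM) (a : k) (v : BMod k n) :
    (bRep k n).asModuleEquiv ((MonoidAlgebra.single σ a : IncAlg k) • v) =
      a * (chi k n σ * (bRep k n).asModuleEquiv v) := by
  rw [Representation.asModuleEquiv_map_smul, Representation.asAlgebraHom_single,
    LinearMap.smul_apply, bRep_apply]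
  unfold chi
  split_ifs with h
  · rw [Module.End.one_apply]
    simp [smul_eq_mul]
  · simp

theorem of_eq_single (k : Type*) [Field k] (σ : IncM) :
    ofInc k σ = (MonoidAlgebra.single σ 1 : IncAlg k) := rfl

theorem algebraMap_eq_single (k : Type*) [Field k] (a : k) :
    algebraMap k (IncAlg k) a = (MonoidAlgebra.single 1 a : IncAlg k) := by
  rw [MonoidAlgebra.coe_algebraMap]
  simp

theorem bmod_of_smul (k : Type*) [Field k] (n : ℕ) (σ : IncM) (v : BMod k n) :
    (bRep k n).asModuleEquiv (ofInc k σ • v) = chi k n σ * (bRep k n).asModuleEquiv v := by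
  rw [of_eq_single, bmod_single_smul, one_mul]

theorem bmod_alg_smul (k : Type*) [Field k] (n : ℕ) (a : k) (v : BMod k n) :
    (bRep k n).asModuleEquiv (algebraMap k (IncAlg k) a • v) =
      a * (bRep k n).asModuleEquiv v := by
  rw [algebraMap_eq_single, bmod_single_smul, chi_one, one_mul]
/-- Every smooth self-extension of `B^n` splits: if a smooth
`k[I]`-module `E` has a submodule `N ≅ B^n` with `E/N ≅ B^n`, then `N` is a direct
summand of `E`. -/
theorem smooth_self_extension_splits (k : Type*) [Field k] (n : ℕ)
    (E : Type*) [AddCommGroup E] [Module (IncAlg k) E] (hE : IsSmoothMod k E)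
    (N : Submodule (IncAlg k) E)
    (h1 : Nonempty (N ≃ₗ[IncAlg k] BMod k n))
    (h2 : Nonempty ((E ⧸ N) ≃ₗ[IncAlg k] BMod k n)) :
    ∃ C : Submodule (IncAlg k) E, IsCompl N C := by
  classical
  obtain ⟨φ⟩ := h1
  obtain ⟨ψ⟩ := h2
  set e := (bRep k n).asModuleEquiv with he
  set asm : k → IncAlg k := fun a => algebraMap k (IncAlg k) a with hasm
  -- commuting scalars
  have hasm1 : asm 1 = 1 := map_one (algebraMap k (IncAlg k))
  have hasm0 : asm 0 = 0 := map_zero (algebraMap k (IncAlg k))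
  have hcomm : ∀ (a : k) (r : IncAlg k) (z : E), asm a • (r • z) = r • (asm a • z) := by
    intro a r z
    rw [smul_smul, smul_smul, Algebra.commutes]
  have hasm_mul : ∀ (a b : k) (z : E), asm a • (asm b • z) = asm (a * b) • z := by
    intro a b z
    rw [smul_smul, ← map_mul]
  have hadd : ∀ (a b : k) (z : E), asm a • z + asm b • z = asm (a + b) • z := by
    intro a b z
    rw [← add_smul, ← map_add]
  -- the generator of B^n
  set u : BMod k n := e.symm 1 with hu
  have heu : e u = 1 := e.apply_symm_apply 1
  have hune : u ≠ 0 := by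
    intro h
    rw [h, map_zero] at heu
    exact zero_ne_one heu
  -- action on B^n
  have hBof : ∀ (σ : IncM) (v : BMod k n), ofInc k σ • v = asm (chi k n σ) • v := by
    intro σ v
    apply e.injective
    rw [bmod_of_smul]
    rw [show asm (chi k n σ) = algebraMap k (IncAlg k) (chi k n σ) from rfl, bmod_alg_smul]
  -- y : generator of N
  set y0 : N := φ.symm u with hy0
  set y : E := (y0 : E) with hy
  have hφy0 : φ y0 = u := φ.apply_symm_apply u
  have hy0ne : y0 ≠ 0 := by
    intro h
    apply hune
    rw [← hφy0, h, map_zero]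
  have hyne : y ≠ 0 := fun h => hy0ne (Subtype.ext h)
  have spanN : ∀ z : N, ∃ a : k, z = asm a • y0 := by
    intro z
    refine ⟨e (φ z), ?_⟩
    apply φ.injective
    rw [map_smul, hφy0]
    apply e.injective
    rw [show asm (e (φ z)) = algebraMap k (IncAlg k) (e (φ z)) from rfl, bmod_alg_smul, heu,
      mul_one]
  have yact0 : ∀ σ : IncM, ofInc k σ • y0 = asm (chi k n σ) • y0 := by
    intro σ
    apply φ.injective
    rw [map_smul, map_smul, hφy0, hBof]
  have yact : ∀ σ : IncM, ofInc k σ • y = asm (chi k n σ) • y := by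
    intro σ
    have := congrArg (Subtype.val) (yact0 σ)
    simpa using this
  have yinj : ∀ a b : k, asm a • y = asm b • y → a = b := by
    intro a b h
    have h0 : asm a • y0 = asm b • y0 := Subtype.ext (by simpa using h)
    have h1 := congrArg φ h0
    rw [map_smul, map_smul, hφy0] at h1
    have h2 := congrArg e h1
    rw [show asm a = algebraMap k (IncAlg k) a from rfl,
      show asm b = algebraMap k (IncAlg k) b from rfl, bmod_alg_smul, bmod_alg_smul, heu] at h2
    simpa using h2
  -- x : lift of generator of E/N
  obtain ⟨x, hπx⟩ := N.mkQ_surjective (ψ.symm u)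
  have hψx : ψ (N.mkQ x) = u := by rw [hπx, ψ.apply_symm_apply]
  have xact : ∀ σ : IncM, ofInc k σ • (N.mkQ x) = asm (chi k n σ) • (N.mkQ x) := by
    intro σ
    apply ψ.injective
    rw [map_smul, map_smul, hψx, hBof]
  have xinj : ∀ a b : k, asm a • (N.mkQ x) = asm b • (N.mkQ x) → a = b := by
    intro a b h
    have h1 := congrArg ψ h
    rw [map_smul, map_smul, hψx] at h1
    have h2 := congrArg e h1
    rw [show asm a = algebraMap k (IncAlg k) a from rfl,
      show asm b = algebraMap k (IncAlg k) b from rfl, bmod_alg_smul, bmod_alg_smul, heu] at h2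
    simpa using h2
  have spanQ : ∀ w : E ⧸ N, ∃ a : k, w = asm a • (N.mkQ x) := by
    intro w
    refine ⟨e (ψ w), ?_⟩
    apply ψ.injective
    rw [map_smul, hψx]
    apply e.injective
    rw [show asm (e (ψ w)) = algebraMap k (IncAlg k) (e (ψ w)) from rfl, bmod_alg_smul, heu,
      mul_one]
  -- the cocycle c
  have cdef : ∀ σ : IncM, ∃ a : k, ofInc k σ • x - asm (chi k n σ) • x = asm a • y := by
    intro σ
    have hmem : ofInc k σ • x - asm (chi k n σ) • x ∈ N := by
      rw [← Submodule.Quotient.mk_eq_zero N, ← Submodule.mkQ_apply, map_sub, map_smul, map_smul,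
        xact, sub_self]
    obtain ⟨a, ha⟩ := spanN ⟨_, hmem⟩
    refine ⟨a, ?_⟩
    have := congrArg (Subtype.val) ha
    simpa using this
  choose c hc using cdef
  have hc' : ∀ σ : IncM, ofInc k σ • x = asm (chi k n σ) • x + asm (c σ) • y := by
    intro σ
    rw [← hc σ]
    abel
  -- cocycle identity
  have cocycle : ∀ σ τ : IncM, c (σ * τ) = chi k n τ * c σ + chi k n σ * c τ := by
    intro σ τ
    have h1 : ofInc k (σ * τ) • x
        = asm (chi k n σ * chi k n τ) • x + asm (chi k n τ * c σ + chi k n σ * c τ) • y := by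
      calc ofInc k (σ * τ) • x = ofInc k σ • (ofInc k τ • x) := by
            rw [← mul_smul]
            congr 1
            exact map_mul (MonoidAlgebra.of k IncM) σ τ
        _ = ofInc k σ • (asm (chi k n τ) • x + asm (c τ) • y) := by rw [hc' τ]
        _ = asm (chi k n τ) • (ofInc k σ • x) + asm (c τ) • (ofInc k σ • y) := by
            rw [smul_add, hcomm, hcomm]
        _ = asm (chi k n τ) • (asm (chi k n σ) • x + asm (c σ) • y)
              + asm (c τ) • (asm (chi k n σ) • y) := by rw [hc' σ, yact σ]
        _ = asm (chi k n σ * chi k n τ) • x + asm (chi k n τ * c σ + chi k n σ * c τ) • y := by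
            rw [smul_add, hasm_mul, hasm_mul, hasm_mul, add_assoc, hadd]
            rw [mul_comm (chi k n τ) (chi k n σ), mul_comm (c τ) (chi k n σ)]
    rw [hc' (σ * τ), chi_mul] at h1
    exact yinj _ _ (add_left_cancel h1)
  have c1 : c 1 = 0 := by
    have h := hc' 1
    rw [chi_one, hasm1, one_smul, show ofInc k (1 : IncM) = 1 from map_one _, one_smul] at h
    have h0 : asm (c 1) • y = 0 := (left_eq_add.mp h)
    apply yinj _ 0
    rw [h0, hasm0, zero_smul]
  -- smoothness : c vanishes on alpha j for large j
  obtain ⟨m, hm⟩ := hE x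
  have calpha_large : ∀ j : ℕ+, max m n < (j : ℕ) → c (alpha j) = 0 := by
    intro j hj
    have hmem : alpha j ∈ Igt m := Submonoid.subset_closure ⟨j, by omega, rfl⟩
    have hfixx : ofInc k (alpha j) • x = x := hm _ hmem
    have hχ : chi k n (alpha j) = 1 := by rw [chi_alpha, if_pos (by omega)]
    have h := hc' (alpha j)
    rw [hfixx, hχ, hasm1, one_smul] at h
    have h0 : asm (c (alpha j)) • y = 0 := (left_eq_add.mp h)
    apply yinj _ 0
    rw [h0, hasm0, zero_smul]
  -- relation between values on generators
  have relC : ∀ i j : ℕ+, i ≤ j →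
      chi k n (alpha j) * c (alpha i) + chi k n (alpha i) * c (alpha j)
        = chi k n (alpha i) * c (alpha (j + 1)) + chi k n (alpha (j + 1)) * c (alpha i) := by
    intro i j hij
    have h := congrArg c (alpha_rel i j hij)
    rw [cocycle, cocycle] at h
    exact h
  -- constancy above n
  have step1 : ∀ j : ℕ+, (n : ℕ) < (j : ℕ) → c (alpha j) = c (alpha (j + 1)) := by
    intro j hj
    have hχj : chi k n (alpha j) = 1 := by rw [chi_alpha, if_pos hj]
    have hχj1 : chi k n (alpha (j + 1)) = 1 := by
      rw [chi_alpha, if_pos]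
      have : ((j + 1 : ℕ+) : ℕ) = (j : ℕ) + 1 := rfl
      omega
    have h := relC j j le_rfl
    rw [hχj, hχj1] at h
    simp only [one_mul] at h
    exact add_right_cancel h
  have shift : ∀ (t : ℕ) (j : ℕ+), (n : ℕ) < (j : ℕ) →
      c (alpha j) = c (alpha ⟨(j : ℕ) + t, by positivity⟩) := by
    intro t
    induction t with
    | zero =>
        intro j hj
        have hj0 : (⟨(j : ℕ) + 0, by positivity⟩ : ℕ+) = j := Subtype.ext (Nat.add_zero _)
        rw [hj0]
    | succ t ih =>
        intro j hj
        have h1 : (⟨(j : ℕ) + (t + 1), by positivity⟩ : ℕ+)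
            = (⟨(j : ℕ) + t, by positivity⟩ : ℕ+) + 1 := Subtype.ext rfl
        exact (ih j hj).trans ((step1 (⟨(j : ℕ) + t, by positivity⟩ : ℕ+)
          (by rw [PNat.mk_coe]; omega)).trans (congrArg (fun p : ℕ+ => c (alpha p)) h1.symm))
  have cgen_big : ∀ j : ℕ+, (n : ℕ) < (j : ℕ) → c (alpha j) = 0 := by
    intro j hj
    rw [shift (max m n + 1) j hj]
    apply calpha_large
    rw [PNat.mk_coe]
    omega
  have cgen : ∀ i : ℕ+, c (alpha i) = 0 := by
    intro i
    rcases lt_or_ge (n : ℕ) (i : ℕ) with h | h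
    · exact cgen_big i h
    · -- i ≤ n, so n ≥ 1
      have hn : 0 < n := lt_of_lt_of_le i.pos h
      set np : ℕ+ := ⟨n, hn⟩ with hnp
      have hin : i ≤ np := by
        rw [← PNat.coe_le_coe, PNat.mk_coe]
        exact h
      have hχi : chi k n (alpha i) = 0 := by
        rw [chi_alpha, if_neg (by omega)]
      have hχn : chi k n (alpha np) = 0 := by
        rw [chi_alpha, if_neg (by rw [PNat.mk_coe]; omega)]
      have hχn1 : chi k n (alpha (np + 1)) = 1 := by
        rw [chi_alpha, if_pos (by rw [PNat.add_coe, PNat.mk_coe, PNat.one_coe]; omega)]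
      have h := relC i np hin
      rw [hχi, hχn, hχn1, zero_mul, zero_mul, zero_mul, zero_add, zero_add, one_mul] at h
      exact h.symm
  -- c vanishes everywhere
  have czero : ∀ σ : IncM, c σ = 0 := by
    intro σ
    refine Submonoid.closure_induction (motive := fun σ _ => c σ = 0) ?_ c1 ?_ (IncM.mem_closure_alpha σ)
    · rintro s ⟨i, rfl⟩
      exact cgen i
    · intro σ τ _ _ hσ hτ
      rw [cocycle, hσ, hτ, mul_zero, mul_zero, add_zero]
  have xact' : ∀ σ : IncM, ofInc k σ • x = asm (chi k n σ) • x := by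
    intro σ
    rw [hc' σ, czero σ, hasm0, zero_smul, add_zero]
  -- the complement
  have hr : ∀ r : IncAlg k, ∃ b : k, r • x = asm b • x := by
    intro r
    induction r using MonoidAlgebra.induction with
    | zero => exact ⟨0, by show (0 : IncAlg k) • x = asm 0 • x; rw [hasm0]⟩
    | single_add σ a f _ _ ihf =>
        obtain ⟨b, hb⟩ := ihf
        refine ⟨a * chi k n σ + b, ?_⟩
        have hsingle : (MonoidAlgebra.single σ a : IncAlg k) = asm a * ofInc k σ :=
          MonoidAlgebra.single_eq_algebraMap_mul_of σ a
        rw [add_smul, hsingle, mul_smul, xact' σ, hasm_mul, hb, hadd]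
  set C : Submodule (IncAlg k) E :=
    { carrier := Set.range (fun a : k => asm a • x)
      zero_mem' := ⟨0, by show asm 0 • x = 0; rw [hasm0, zero_smul]⟩
      add_mem' := by
        rintro _ _ ⟨a, rfl⟩ ⟨b, rfl⟩
        exact ⟨a + b, (hadd a b x).symm⟩
      smul_mem' := by
        rintro r _ ⟨a, rfl⟩
        obtain ⟨b, hb⟩ := hr r
        refine ⟨a * b, ?_⟩
        show asm (a * b) • x = r • (asm a • x)
        rw [← hasm_mul, ← hb, hcomm] } with hC
  refine ⟨C, ?_, ?_⟩
  · -- disjoint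
    rw [Submodule.disjoint_def]
    intro z hzN hzC
    obtain ⟨a, ha⟩ := hzC
    dsimp only at ha
    have hz0 : N.mkQ z = 0 := by
      rw [Submodule.mkQ_apply]
      exact (Submodule.Quotient.mk_eq_zero N).2 hzN
    have h1 : asm a • (N.mkQ x) = asm 0 • (N.mkQ x) := by
      rw [hasm0, zero_smul, ← map_smul, ha]
      exact hz0
    have h2 := xinj _ _ h1
    rw [← ha, h2, hasm0, zero_smul]
  · -- codisjoint
    rw [codisjoint_iff, eq_top_iff]
    intro z _
    obtain ⟨a, ha⟩ := spanQ (N.mkQ z)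
    have hmem : z - asm a • x ∈ N := by
      rw [← Submodule.Quotient.mk_eq_zero N, ← Submodule.mkQ_apply, map_sub, map_smul, ← ha,
        sub_self]
    have : z = (z - asm a • x) + asm a • x := by abel
    rw [this]
    exact Submodule.add_mem_sup hmem ⟨a, rfl⟩

end
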